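/- Let V* ∈ R^{P×K} have orthonormal columns, let a* ∈ R^K, and let R, R^+ ∈ O(K) be the optimal rotations aligning V and V^+ to V* respectively (i.e., R minimizes ||V - V*Y||_F over Y ∈ O(K) and R^+ minimizes ||V^+ - V*Y||_F). Then ||R^T diag(a*) R - R^{+T} diag(a*) R^+||_F ≤ 4 ||diag(a*)||_2 ||V^+ - V* R||_F. -/

import Mathlib

open Matrix

/-- Frobenius norm of a real matrix. -/
noncomputable def frobNorm {m n : ℕ} (A : Matrix (Fin m) (Fin n) ℝ) : ℝ :=
  Real.sqrt (∑ i, ∑ j, (A i j) ^ 2)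

/-- Spectral norm (ℓ₂ operator norm) of a real matrix. -/
noncomputable def specNorm {m n : ℕ} (A : Matrix (Fin m) (Fin n) ℝ) : ℝ :=
  ‖LinearMap.toContinuousLinearMap (Matrix.toEuclideanLin A)‖

lemma frobNorm_nonneg {m n : ℕ} (A : Matrix (Fin m) (Fin n) ℝ) : 0 ≤ frobNorm A :=
  Real.sqrt_nonneg _

lemma specNorm_nonneg {m n : ℕ} (A : Matrix (Fin m) (Fin n) ℝ) : 0 ≤ specNorm A :=
  norm_nonneg _

section
attribute [local instance] Matrix.frobeniusSeminormedAddCommGroup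

lemma frobNorm_eq_norm {m n : ℕ} (A : Matrix (Fin m) (Fin n) ℝ) : frobNorm A = ‖A‖ := by
  rw [Matrix.frobenius_norm_def, frobNorm, Real.sqrt_eq_rpow]
  norm_num [Real.norm_eq_abs, sq_abs]

lemma frobNorm_triangle {m n : ℕ} (A B : Matrix (Fin m) (Fin n) ℝ) :
    frobNorm (A + B) ≤ frobNorm A + frobNorm B := by
  simp only [frobNorm_eq_norm]; exact norm_add_le A B

lemma frobNorm_neg {m n : ℕ} (A : Matrix (Fin m) (Fin n) ℝ) :
    frobNorm (-A) = frobNorm A := by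
  simp only [frobNorm_eq_norm, norm_neg]

end

lemma frobNorm_transpose {m n : ℕ} (A : Matrix (Fin m) (Fin n) ℝ) :
    frobNorm Aᵀ = frobNorm A := by
  rw [frobNorm, frobNorm, Finset.sum_comm]
  rfl

lemma sum_sq_eq_trace {m n : ℕ} (A : Matrix (Fin m) (Fin n) ℝ) :
    ∑ i, ∑ j, (A i j) ^ 2 = Matrix.trace (Aᵀ * A) := by
  rw [Matrix.trace, Finset.sum_comm]
  simp [Matrix.diag, Matrix.mul_apply, sq]

lemma frobNorm_mul_left {P K n : ℕ} (W : Matrix (Fin P) (Fin K) ℝ) (hW : Wᵀ * W = 1)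
    (A : Matrix (Fin K) (Fin n) ℝ) : frobNorm (W * A) = frobNorm A := by
  rw [frobNorm, frobNorm, sum_sq_eq_trace, sum_sq_eq_trace, Matrix.transpose_mul,
    Matrix.mul_assoc, ← Matrix.mul_assoc Wᵀ, hW, Matrix.one_mul]

lemma frobNorm_mul_right {m K : ℕ} (A : Matrix (Fin m) (Fin K) ℝ)
    (Q : Matrix (Fin K) (Fin K) ℝ) (hQ : Qᵀ * Q = 1) :
    frobNorm (A * Q) = frobNorm A := by
  have hQ' : Q * Qᵀ = 1 := mul_eq_one_comm.mp hQ
  rw [← frobNorm_transpose (A * Q), Matrix.transpose_mul,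
    frobNorm_mul_left Qᵀ (by rwa [Matrix.transpose_transpose]), frobNorm_transpose]

lemma abs_le_specNorm_diagonal {K : ℕ} (a : Fin K → ℝ) (i : Fin K) :
    |a i| ≤ specNorm (Matrix.diagonal a) := by
  set L := LinearMap.toContinuousLinearMap (Matrix.toEuclideanLin (Matrix.diagonal a))
  have h := L.le_opNorm (EuclideanSpace.single i 1)
  have h1 : ‖EuclideanSpace.single i (1:ℝ)‖ = 1 := by
    rw [EuclideanSpace.norm_single]; norm_num
  have h2 : L (EuclideanSpace.single i 1) = EuclideanSpace.single i (a i) := by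
    show Matrix.toEuclideanLin (Matrix.diagonal a) _ = _
    rw [← EuclideanSpace.toLp_single, ← EuclideanSpace.toLp_single,
      Matrix.toEuclideanLin_apply_piLp_toLp, Matrix.diagonal_mulVec_single, mul_one]
  rw [h1, mul_one, h2, EuclideanSpace.norm_single, Real.norm_eq_abs] at h
  exact h

lemma frobNorm_diag_mul {K n : ℕ} (a : Fin K → ℝ) (A : Matrix (Fin K) (Fin n) ℝ) :
    frobNorm (Matrix.diagonal a * A) ≤ specNorm (Matrix.diagonal a) * frobNorm A := by
  set s := specNorm (Matrix.diagonal a) with hs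
  have hs0 : 0 ≤ s := norm_nonneg _
  rw [frobNorm, frobNorm, ← Real.sqrt_sq hs0, ← Real.sqrt_mul (by positivity)]
  apply Real.sqrt_le_sqrt
  rw [Finset.mul_sum]
  apply Finset.sum_le_sum
  intro i _
  rw [Finset.mul_sum]
  apply Finset.sum_le_sum
  intro j _
  rw [Matrix.diagonal_mul, mul_pow]
  have : (a i) ^ 2 ≤ s ^ 2 := by
    rw [← sq_abs]
    exact pow_le_pow_left₀ (abs_nonneg _) (abs_le_specNorm_diagonal a i) 2
  nlinarith [sq_nonneg (A i j)]

theorem stmt_5 {P K : ℕ} (Vstar V Vplus : Matrix (Fin P) (Fin K) ℝ)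
    (hVstar : Vstarᵀ * Vstar = 1)
    (astar : Fin K → ℝ)
    (R Rplus : Matrix (Fin K) (Fin K) ℝ)
    (hR : Rᵀ * R = 1) (hRplus : Rplusᵀ * Rplus = 1)
    (hRmin : ∀ Y : Matrix (Fin K) (Fin K) ℝ, Yᵀ * Y = 1 →
      frobNorm (V - Vstar * R) ≤ frobNorm (V - Vstar * Y))
    (hRplusmin : ∀ Y : Matrix (Fin K) (Fin K) ℝ, Yᵀ * Y = 1 →
      frobNorm (Vplus - Vstar * Rplus) ≤ frobNorm (Vplus - Vstar * Y)) :
    frobNorm (Rᵀ * Matrix.diagonal astar * R - Rplusᵀ * Matrix.diagonal astar * Rplus) ≤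
      4 * specNorm (Matrix.diagonal astar) * frobNorm (Vplus - Vstar * R) := by
  set D := Matrix.diagonal astar with hD
  set s := specNorm D with hs
  have hs0 : 0 ≤ s := specNorm_nonneg _
  set d := frobNorm (Vplus - Vstar * R) with hd
  have hd0 : 0 ≤ d := frobNorm_nonneg _
  -- R - Rplus has small Frobenius norm
  have hdiff : frobNorm (R - Rplus) ≤ 2 * d := by
    have e1 : frobNorm (R - Rplus) = frobNorm (Vstar * R - Vstar * Rplus) := by
      rw [← Matrix.mul_sub, frobNorm_mul_left Vstar hVstar]
    have e2 : Vstar * R - Vstar * Rplus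
        = -(Vplus - Vstar * R) + (Vplus - Vstar * Rplus) := by abel
    calc frobNorm (R - Rplus)
        = frobNorm (-(Vplus - Vstar * R) + (Vplus - Vstar * Rplus)) := by rw [e1, e2]
      _ ≤ frobNorm (-(Vplus - Vstar * R)) + frobNorm (Vplus - Vstar * Rplus) :=
          frobNorm_triangle _ _
      _ ≤ d + d := by
          rw [frobNorm_neg]
          exact add_le_add le_rfl (hRplusmin R hR)
      _ = 2 * d := by ring
  -- decomposition
  have decomp : Rᵀ * D * R - Rplusᵀ * D * Rplus
      = Rᵀ * (D * (R - Rplus)) + ((R - Rplus)ᵀ * D) * Rplus := by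
    rw [Matrix.transpose_sub]
    noncomm_ring
  have hRRt : R * Rᵀ = 1 := mul_eq_one_comm.mp hR
  have b1 : frobNorm (Rᵀ * (D * (R - Rplus))) ≤ s * frobNorm (R - Rplus) := by
    rw [frobNorm_mul_left Rᵀ (by rwa [Matrix.transpose_transpose])]
    exact frobNorm_diag_mul astar _
  have b2 : frobNorm (((R - Rplus)ᵀ * D) * Rplus) ≤ s * frobNorm (R - Rplus) := by
    rw [frobNorm_mul_right _ Rplus hRplus, ← frobNorm_transpose ((R - Rplus)ᵀ * D),
      Matrix.transpose_mul, Matrix.transpose_transpose, Matrix.diagonal_transpose]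
    exact frobNorm_diag_mul astar _
  calc frobNorm (Rᵀ * D * R - Rplusᵀ * D * Rplus)
      = frobNorm (Rᵀ * (D * (R - Rplus)) + ((R - Rplus)ᵀ * D) * Rplus) := by rw [decomp]
    _ ≤ frobNorm (Rᵀ * (D * (R - Rplus))) + frobNorm (((R - Rplus)ᵀ * D) * Rplus) :=
        frobNorm_triangle _ _
    _ ≤ s * frobNorm (R - Rplus) + s * frobNorm (R - Rplus) := add_le_add b1 b2
    _ ≤ s * (2 * d) + s * (2 * d) :=
        add_le_add (mul_le_mul_of_nonneg_left hdiff hs0) (mul_le_mul_of_nonneg_left hdiff hs0)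
    _ = 4 * s * d := by ring
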